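/- (Bauer–Fike) If A ∈ ℂ^{N×N} is diagonalizable, A = VDV⁻¹ with D diagonal, then for every ε > 0, σ_ε(A) ⊆ σ(A) + B(0, ε·κ(V)), where κ(V) = ‖V‖·‖V⁻¹‖. -/

import Mathlib

open Matrix

/-- The operator norm of a matrix, induced by the Euclidean norm. -/
noncomputable def opNorm {n : Type*} [Fintype n] [DecidableEq n]
    (A : Matrix n n ℂ) : ℝ :=
  ‖Matrix.toEuclideanCLM (𝕜 := ℂ) A‖

lemma opNorm_mul_le {n : Type*} [Fintype n] [DecidableEq n] (A B : Matrix n n ℂ) :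
    opNorm (A * B) ≤ opNorm A * opNorm B := by
  unfold opNorm; rw [_root_.map_mul]; exact norm_mul_le _ _

lemma opNorm_diagonal_le {n : Type*} [Fintype n] [DecidableEq n] (w : n → ℂ) :
    opNorm (Matrix.diagonal w) ≤ ‖w‖ := by
  unfold opNorm
  refine ContinuousLinearMap.opNorm_le_bound _ (norm_nonneg w) fun x => ?_
  have hx : ∀ i, (Matrix.toEuclideanCLM (𝕜 := ℂ) (Matrix.diagonal w) x) i = w i * x i := by
    intro i
    have h2 := congrFun (Matrix.ofLp_toEuclideanCLM (Matrix.diagonal w) x) i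
    simpa [Matrix.mulVec_diagonal] using h2
  rw [EuclideanSpace.norm_eq, EuclideanSpace.norm_eq,
    ← Real.sqrt_sq (norm_nonneg w), ← Real.sqrt_mul (sq_nonneg _)]
  refine Real.sqrt_le_sqrt ?_
  rw [Finset.mul_sum]
  refine Finset.sum_le_sum fun i _ => ?_
  rw [hx i, norm_mul]
  calc (‖w i‖ * ‖x i‖) ^ 2 ≤ (‖w‖ * ‖x i‖) ^ 2 := by
        refine pow_le_pow_left₀ (by positivity) ?_ 2
        exact mul_le_mul_of_nonneg_right (norm_le_pi_norm w i) (norm_nonneg _)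
    _ = ‖w‖ ^ 2 * ‖x i‖ ^ 2 := by ring

theorem bauer_fike {N : ℕ} (A V D : Matrix (Fin N) (Fin N) ℂ)
    (hV : IsUnit V) (hD : D.IsDiag) (hA : A = V * D * V⁻¹)
    (ε : ℝ) (hε : 0 < ε) (z : ℂ)
    (hz : ¬ IsUnit (z • (1 : Matrix (Fin N) (Fin N) ℂ) - A) ∨
      opNorm ((z • (1 : Matrix (Fin N) (Fin N) ℂ) - A)⁻¹) > 1 / ε) :
    ∃ μ ∈ spectrum ℂ A, dist z μ < ε * (opNorm V * opNorm V⁻¹) := by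
  have hVd : IsUnit V.det := (Matrix.isUnit_iff_isUnit_det V).mp hV
  have hVV : V * V⁻¹ = 1 := Matrix.mul_nonsing_inv V hVd
  -- N = 0 case: everything is a unit and opNorm is 0
  rcases Nat.eq_zero_or_pos N with hN | hN
  · subst hN
    exfalso
    rcases hz with h | h
    · exact h (isUnit_of_subsingleton _)
    · have : opNorm ((z • (1 : Matrix (Fin 0) (Fin 0) ℂ) - A)⁻¹) = 0 := by
        unfold opNorm
        have : (Matrix.toEuclideanCLM (𝕜 := ℂ)
            ((z • (1 : Matrix (Fin 0) (Fin 0) ℂ) - A)⁻¹)) = 0 := Subsingleton.elim _ _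
        rw [this, norm_zero]
      rw [this] at h
      exact absurd h (not_lt.mpr (by positivity))
  -- conjugation identity
  have key : ∀ c : ℂ, c • (1 : Matrix (Fin N) (Fin N) ℂ) - A
      = V * (c • 1 - D) * V⁻¹ := by
    intro c
    rw [hA, Matrix.mul_sub, Matrix.sub_mul]
    congr 1
    rw [Matrix.mul_smul, Matrix.mul_one, Matrix.smul_mul, hVV]
  -- diagonal form
  set w : Fin N → ℂ := fun i => z - D i i with hw
  have hdiag : z • (1 : Matrix (Fin N) (Fin N) ℂ) - D = Matrix.diagonal w := by
    rw [← hD.diagonal_diag, Matrix.smul_one_eq_diagonal, Matrix.diagonal_sub]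
    rfl
  -- spectrum characterization
  have hspec : ∀ μ : ℂ, μ ∈ spectrum ℂ A ↔ ∃ i, μ = D i i := by
    intro μ
    rw [spectrum.mem_iff, Algebra.algebraMap_eq_smul_one, Matrix.isUnit_iff_isUnit_det, key,
      Matrix.det_mul, Matrix.det_mul]
    have h1 : (μ • (1 : Matrix (Fin N) (Fin N) ℂ) - D).det = ∏ i, (μ - D i i) := by
      rw [← hD.diagonal_diag, Matrix.smul_one_eq_diagonal, Matrix.diagonal_sub,
        Matrix.det_diagonal]
      simp
    rw [mul_comm V.det, mul_assoc, ← Matrix.det_mul, hVV, Matrix.det_one, mul_one, h1]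
    rw [isUnit_iff_ne_zero, Finset.prod_ne_zero_iff]
    constructor
    · intro h
      push_neg at h
      obtain ⟨i, _, hi⟩ := h
      exact ⟨i, (sub_eq_zero.mp hi)⟩
    · rintro ⟨i, rfl⟩ h
      exact h i (Finset.mem_univ i) (sub_self _)
  by_cases hzs : z ∈ spectrum ℂ A
  · refine ⟨z, hzs, ?_⟩
    rw [dist_self]
    have h1 : (1 : ℝ) ≤ opNorm V * opNorm V⁻¹ := by
      have := opNorm_mul_le V V⁻¹
      rw [hVV] at this
      refine le_trans ?_ this
      unfold opNorm
      rw [_root_.map_one]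
      have : Nontrivial (EuclideanSpace ℂ (Fin N)) := by
        refine ⟨⟨0, EuclideanSpace.single ⟨0, hN⟩ 1, ?_⟩⟩
        intro h
        have := congrArg (fun v : EuclideanSpace ℂ (Fin N) => v ⟨0, hN⟩) h.symm
        simp [EuclideanSpace.single_apply] at this
      rw [norm_one]
    positivity
  -- z not in spectrum: matrix is a unit
  have hwne : ∀ i, w i ≠ 0 := by
    intro i hi
    exact hzs ((hspec z).mpr ⟨i, by simpa [hw, sub_eq_zero] using hi⟩)
  have hunit : IsUnit (z • (1 : Matrix (Fin N) (Fin N) ℂ) - A) := by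
    rw [key, hdiag]
    refine (hV.mul ?_).mul (Matrix.isUnit_nonsing_inv_iff.mpr ?_)
    · rw [Matrix.isUnit_iff_isUnit_det, Matrix.det_diagonal, isUnit_iff_ne_zero,
        Finset.prod_ne_zero_iff]
      exact fun i _ => hwne i
    · exact hV
  rcases hz with h | h
  · exact absurd hunit h
  -- compute the inverse
  have hinv : (z • (1 : Matrix (Fin N) (Fin N) ℂ) - A)⁻¹
      = V * Matrix.diagonal (fun i => (w i)⁻¹) * V⁻¹ := by
    rw [key, hdiag, Matrix.mul_inv_rev, Matrix.mul_inv_rev,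
      Matrix.nonsing_inv_nonsing_inv V hVd,
      Matrix.inv_eq_right_inv (B := Matrix.diagonal fun i => (w i)⁻¹) (by
        rw [Matrix.diagonal_mul_diagonal]
        convert Matrix.diagonal_one with i
        exact mul_inv_cancel₀ (hwne i)), mul_assoc]
  -- bound
  have hbound : 1 / ε < opNorm V * opNorm V⁻¹ * ‖fun i => (w i)⁻¹‖ := by
    calc 1 / ε < opNorm ((z • (1 : Matrix (Fin N) (Fin N) ℂ) - A)⁻¹) := h
    _ ≤ opNorm (V * Matrix.diagonal fun i => (w i)⁻¹) * opNorm V⁻¹ := by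
        rw [hinv]; exact opNorm_mul_le _ _
    _ ≤ opNorm V * opNorm (Matrix.diagonal fun i => (w i)⁻¹) * opNorm V⁻¹ := by
        have := opNorm_mul_le V (Matrix.diagonal fun i => (w i)⁻¹)
        have h0 : 0 ≤ opNorm V⁻¹ := norm_nonneg _
        exact mul_le_mul_of_nonneg_right this h0
    _ ≤ opNorm V * ‖fun i => (w i)⁻¹‖ * opNorm V⁻¹ := by
        have := opNorm_diagonal_le (fun i => (w i)⁻¹)
        have h0 : 0 ≤ opNorm V := norm_nonneg _
        have h1 : 0 ≤ opNorm V⁻¹ := norm_nonneg _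
        exact mul_le_mul_of_nonneg_right (mul_le_mul_of_nonneg_left this h0) h1
    _ = opNorm V * opNorm V⁻¹ * ‖fun i => (w i)⁻¹‖ := by ring
  -- find index achieving sup norm
  have hne : (Finset.univ : Finset (Fin N)).Nonempty := ⟨⟨0, hN⟩, Finset.mem_univ _⟩
  obtain ⟨i, _, hi⟩ := Finset.exists_mem_eq_sup Finset.univ hne
    (fun i => ‖(w i)⁻¹‖₊)
  have hnorm : ‖fun i => (w i)⁻¹‖ = ‖(w i)⁻¹‖ := by
    rw [Pi.norm_def, hi]
    rfl
  rw [hnorm, norm_inv] at hbound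
  refine ⟨D i i, (hspec _).mpr ⟨i, rfl⟩, ?_⟩
  have hwpos : 0 < ‖w i‖ := norm_pos_iff.mpr (hwne i)
  have hK : 0 < opNorm V * opNorm V⁻¹ := by
    by_contra hK
    push_neg at hK
    have : opNorm V * opNorm V⁻¹ * ‖w i‖⁻¹ ≤ 0 :=
      mul_nonpos_of_nonpos_of_nonneg hK (by positivity)
    have h2 : 0 < 1 / ε := by positivity
    linarith
  have : dist z (D i i) = ‖w i‖ := by
    rw [Complex.dist_eq]
  rw [this]
  set K := opNorm V * opNorm V⁻¹
  have h3 : ‖w i‖ * (1/ε) < ‖w i‖ * (K * ‖w i‖⁻¹) := mul_lt_mul_of_pos_left hbound hwpos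
  rw [mul_comm K, ← mul_assoc, mul_inv_cancel₀ hwpos.ne', one_mul] at h3
  rw [mul_one_div, div_lt_iff₀ hε] at h3
  linarith
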